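/- arXiv:2201.12479 — 3 statements merged into one kernel-verified Lean document; each statement's English description precedes it below -/
import Mathlib

section
/- Let $g$ be a $3\times 3$ real matrix with $g_{ij}=0$ for $i<j$, $g_{ij}>0$ for $i\geq j$, and with the $2\times 2$ minor $g_{21}g_{32}-g_{31}g_{22}>0$. Then every eigenspace of $g$ acting on $\mathbb{R}^3$ is one-dimensional. -/
/-- A 3×3 totally positive lower triangular real matrix has all eigenspaces
one-dimensional. -/
theorem stmt1 (g : Matrix (Fin 3) (Fin 3) ℝ)
    (hzero : ∀ i j : Fin 3, i < j → g i j = 0)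
    (hpos : ∀ i j : Fin 3, j ≤ i → 0 < g i j)
    (hminor : 0 < g 1 0 * g 2 1 - g 2 0 * g 1 1) :
    ∀ μ : ℝ, Module.End.eigenspace (Matrix.mulVecLin g) μ ≠ ⊥ →
      Module.finrank ℝ (Module.End.eigenspace (Matrix.mulVecLin g) μ) = 1 := by
  intro μ hne
  set E := Module.End.eigenspace (Matrix.mulVecLin g) μ with hE
  have h01 : g 0 1 = 0 := hzero 0 1 (by decide)
  have h02 : g 0 2 = 0 := hzero 0 2 (by decide)
  have h12 : g 1 2 = 0 := hzero 1 2 (by decide)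
  have hmem : ∀ v : Fin 3 → ℝ, v ∈ E ↔
      (g 0 0 * v 0 = μ * v 0 ∧
       g 1 0 * v 0 + g 1 1 * v 1 = μ * v 1 ∧
       g 2 0 * v 0 + g 2 1 * v 1 + g 2 2 * v 2 = μ * v 2) := by
    intro v
    rw [hE, Module.End.mem_eigenspace_iff]
    constructor
    · intro h
      have h0 := congrFun h 0
      have h1 := congrFun h 1
      have h2 := congrFun h 2
      simp only [Matrix.mulVecLin_apply, Matrix.mulVec, dotProduct,
        Fin.sum_univ_three, Pi.smul_apply, smul_eq_mul, h01, h02, h12,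
        zero_mul, add_zero, zero_add] at h0 h1 h2
      exact ⟨h0, h1, h2⟩
    · rintro ⟨e0, e1, e2⟩
      funext i
      simp only [Matrix.mulVecLin_apply, Matrix.mulVec, dotProduct,
        Fin.sum_univ_three, Pi.smul_apply, smul_eq_mul]
      fin_cases i
      · show g 0 0 * v 0 + g 0 1 * v 1 + g 0 2 * v 2 = μ * v 0
        rw [h01, h02]; linarith
      · show g 1 0 * v 0 + g 1 1 * v 1 + g 1 2 * v 2 = μ * v 1
        rw [h12]; linarith
      · show g 2 0 * v 0 + g 2 1 * v 1 + g 2 2 * v 2 = μ * v 2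
        linarith
  have ha := hpos 0 0 (by decide)
  have hb := hpos 1 1 (by decide)
  have hc := hpos 2 2 (by decide)
  have h10 := hpos 1 0 (by decide)
  have h20 := hpos 2 0 (by decide)
  have h21 := hpos 2 1 (by decide)
  suffices hkey : ∃ w : Fin 3 → ℝ, w ≠ 0 ∧ E ≤ Submodule.span ℝ {w} by
    obtain ⟨w, hw, hle⟩ := hkey
    have hle1 : Module.finrank ℝ E ≤ 1 := by
      have h := Submodule.finrank_mono (R := ℝ) (M := Fin 3 → ℝ) hle
      rwa [finrank_span_singleton hw] at h
    have hge : Module.finrank ℝ E ≠ 0 := fun h => hne (Submodule.finrank_eq_zero.mp h)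
    omega
  have he2 : (![0,0,1] : Fin 3 → ℝ) ≠ 0 := by
    intro h; simpa using congrFun h 2
  by_cases hA : μ = g 0 0 <;> by_cases hB : μ = g 1 1 <;> by_cases hC : μ = g 2 2
  · -- μ = a = b = c
    refine ⟨![0,0,1], he2, ?_⟩
    intro v hv
    obtain ⟨e0, e1, e2'⟩ := (hmem v).1 hv
    have hv0 : v 0 = 0 := by
      have h : g 1 0 * v 0 = 0 := by rw [← hB] at e1; linarith
      exact (mul_eq_zero.mp h).resolve_left (ne_of_gt h10)
    have hv1 : v 1 = 0 := by
      have h : g 2 1 * v 1 = 0 := by rw [← hC] at e2'; rw [hv0] at e2'; linarith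
      exact (mul_eq_zero.mp h).resolve_left (ne_of_gt h21)
    rw [Submodule.mem_span_singleton]
    exact ⟨v 2, by funext i; fin_cases i <;> simp [hv0, hv1]⟩
  · -- μ = a = b ≠ c
    have hcne : g 2 2 - μ ≠ 0 := sub_ne_zero.mpr (fun h => hC h.symm)
    refine ⟨![0, g 2 2 - μ, -(g 2 1)], fun h => hcne (by simpa using congrFun h 1), ?_⟩
    intro v hv
    obtain ⟨e0, e1, e2'⟩ := (hmem v).1 hv
    have hv0 : v 0 = 0 := by
      have h : g 1 0 * v 0 = 0 := by rw [← hB] at e1; linarith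
      exact (mul_eq_zero.mp h).resolve_left (ne_of_gt h10)
    rw [Submodule.mem_span_singleton]
    refine ⟨v 1 / (g 2 2 - μ), ?_⟩
    funext i
    fin_cases i
    · simp [hv0]
    · show v 1 / (g 2 2 - μ) * (g 2 2 - μ) = v 1
      field_simp
    · show v 1 / (g 2 2 - μ) * (-(g 2 1)) = v 2
      rw [hv0] at e2'
      field_simp
      linear_combination -e2'
  · -- μ = a ≠ b, μ = c : minor case
    have hbne : μ - g 1 1 ≠ 0 := sub_ne_zero.mpr hB
    refine ⟨![0,0,1], he2, ?_⟩
    intro v hv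
    obtain ⟨e0, e1, e2'⟩ := (hmem v).1 hv
    have k1 : g 1 0 * v 0 = (μ - g 1 1) * v 1 := by linear_combination e1
    have k2 : g 2 0 * v 0 + g 2 1 * v 1 = 0 := by rw [← hC] at e2'; linarith
    have hcomb : (g 2 0 * (μ - g 1 1) + g 2 1 * g 1 0) * v 0 = 0 := by
      linear_combination (μ - g 1 1) * k2 + g 2 1 * k1
    have hcpos : 0 < g 2 0 * (μ - g 1 1) + g 2 1 * g 1 0 := by
      rw [hA]
      nlinarith [mul_pos h20 ha]
    have hv0 : v 0 = 0 := (mul_eq_zero.mp hcomb).resolve_left (ne_of_gt hcpos)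
    have hv1 : v 1 = 0 := by
      have h : (μ - g 1 1) * v 1 = 0 := by rw [hv0] at k1; linarith
      exact (mul_eq_zero.mp h).resolve_left hbne
    rw [Submodule.mem_span_singleton]
    exact ⟨v 2, by funext i; fin_cases i <;> simp [hv0, hv1]⟩
  · -- μ = a ≠ b, ≠ c : generic eigenvector for a
    have hbne : μ - g 1 1 ≠ 0 := sub_ne_zero.mpr hB
    have hcne : μ - g 2 2 ≠ 0 := sub_ne_zero.mpr hC
    refine ⟨![(μ - g 1 1) * (μ - g 2 2), g 1 0 * (μ - g 2 2),
        g 2 0 * (μ - g 1 1) + g 2 1 * g 1 0],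
      fun h => mul_ne_zero hbne hcne (by simpa using congrFun h 0), ?_⟩
    intro v hv
    obtain ⟨e0, e1, e2'⟩ := (hmem v).1 hv
    have k1 : g 1 0 * v 0 = (μ - g 1 1) * v 1 := by linear_combination e1
    have k2 : g 2 0 * v 0 + g 2 1 * v 1 = (μ - g 2 2) * v 2 := by linear_combination e2'
    rw [Submodule.mem_span_singleton]
    refine ⟨v 0 / ((μ - g 1 1) * (μ - g 2 2)), ?_⟩
    funext i
    fin_cases i
    · show v 0 / ((μ - g 1 1) * (μ - g 2 2)) * ((μ - g 1 1) * (μ - g 2 2)) = v 0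
      field_simp
    · show v 0 / ((μ - g 1 1) * (μ - g 2 2)) * (g 1 0 * (μ - g 2 2)) = v 1
      rw [div_mul_eq_mul_div, div_eq_iff (mul_ne_zero hbne hcne)]
      linear_combination (μ - g 2 2) * k1
    · show v 0 / ((μ - g 1 1) * (μ - g 2 2)) *
          (g 2 0 * (μ - g 1 1) + g 2 1 * g 1 0) = v 2
      field_simp
      linear_combination (μ - g 1 1) * k2 + g 2 1 * k1
  · -- μ ≠ a, μ = b = c
    refine ⟨![0,0,1], he2, ?_⟩
    intro v hv
    obtain ⟨e0, e1, e2'⟩ := (hmem v).1 hv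
    have hv0 : v 0 = 0 := by
      have h : (g 0 0 - μ) * v 0 = 0 := by linear_combination e0
      exact (mul_eq_zero.mp h).resolve_left (sub_ne_zero.mpr (fun h => hA h.symm))
    have hv1 : v 1 = 0 := by
      have h : g 2 1 * v 1 = 0 := by rw [← hC] at e2'; rw [hv0] at e2'; linarith
      exact (mul_eq_zero.mp h).resolve_left (ne_of_gt h21)
    rw [Submodule.mem_span_singleton]
    exact ⟨v 2, by funext i; fin_cases i <;> simp [hv0, hv1]⟩
  · -- μ ≠ a, μ = b ≠ c
    have hcne : g 2 2 - μ ≠ 0 := sub_ne_zero.mpr (fun h => hC h.symm)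
    refine ⟨![0, g 2 2 - μ, -(g 2 1)], fun h => hcne (by simpa using congrFun h 1), ?_⟩
    intro v hv
    obtain ⟨e0, e1, e2'⟩ := (hmem v).1 hv
    have hv0 : v 0 = 0 := by
      have h : (g 0 0 - μ) * v 0 = 0 := by linear_combination e0
      exact (mul_eq_zero.mp h).resolve_left (sub_ne_zero.mpr (fun h => hA h.symm))
    rw [Submodule.mem_span_singleton]
    refine ⟨v 1 / (g 2 2 - μ), ?_⟩
    funext i
    fin_cases i
    · simp [hv0]
    · show v 1 / (g 2 2 - μ) * (g 2 2 - μ) = v 1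
      field_simp
    · show v 1 / (g 2 2 - μ) * (-(g 2 1)) = v 2
      rw [hv0] at e2'
      field_simp
      linear_combination -e2'
  · -- μ ≠ a, ≠ b, μ = c
    refine ⟨![0,0,1], he2, ?_⟩
    intro v hv
    obtain ⟨e0, e1, e2'⟩ := (hmem v).1 hv
    have hv0 : v 0 = 0 := by
      have h : (g 0 0 - μ) * v 0 = 0 := by linear_combination e0
      exact (mul_eq_zero.mp h).resolve_left (sub_ne_zero.mpr (fun h => hA h.symm))
    have hv1 : v 1 = 0 := by
      have h : (g 1 1 - μ) * v 1 = 0 := by rw [hv0] at e1; linear_combination e1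
      exact (mul_eq_zero.mp h).resolve_left (sub_ne_zero.mpr (fun h => hB h.symm))
    rw [Submodule.mem_span_singleton]
    exact ⟨v 2, by funext i; fin_cases i <;> simp [hv0, hv1]⟩
  · -- μ is not an eigenvalue : contradiction
    exfalso
    apply hne
    rw [Submodule.eq_bot_iff]
    intro v hv
    obtain ⟨e0, e1, e2'⟩ := (hmem v).1 hv
    have hv0 : v 0 = 0 := by
      have h : (g 0 0 - μ) * v 0 = 0 := by linear_combination e0
      exact (mul_eq_zero.mp h).resolve_left (sub_ne_zero.mpr (fun h => hA h.symm))
    have hv1 : v 1 = 0 := by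
      have h : (g 1 1 - μ) * v 1 = 0 := by rw [hv0] at e1; linear_combination e1
      exact (mul_eq_zero.mp h).resolve_left (sub_ne_zero.mpr (fun h => hB h.symm))
    have hv2 : v 2 = 0 := by
      have h : (g 2 2 - μ) * v 2 = 0 := by
        rw [hv0, hv1] at e2'; linear_combination e2'
      exact (mul_eq_zero.mp h).resolve_left (sub_ne_zero.mpr (fun h => hC h.symm))
    funext i
    fin_cases i <;> simp [hv0, hv1, hv2]
end

section
/- Let $\Phi$ be an irreducible root system with set of simple roots indexed by $I$, and let $J, J'$ be proper subsets of $I$. Let $w_{J'}$ denote the longest element of the parabolic subgroup $W_{J'}$ of the Weyl group. Then there exists $j \in I \setminus J'$ such that $w_{J'}(\alpha_j) \notin \Phi_J$, where $\Phi_J$ is the sub-root system generated by the simple roots $\{\alpha_i : i \in J\}$. -/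
/-- Lemma on irreducible root systems: for proper subsets `J, J'` of the set of
simple roots, there is a simple root `α_j` with `j ∉ J'` such that the longest
element `w_{J'}` of the parabolic `W_{J'}` sends `α_j` outside `Φ_J`. The root
system is given by a finite set `Φ` of roots in a Euclidean space with a base
`α : I → V`, reflections `s i`, crystallographic integrality, reducedness and
irreducibility (connectedness of the Dynkin diagram); the longest element of
`W_{J'}` is characterized as an element of `W_{J'}` sending every positive root
of `Φ_{J'}` to a negative root. -/
theorem stmt2 {V : Type*} [NormedAddCommGroup V] [InnerProductSpace ℝ V]
    {I : Type*} [Fintype I] [DecidableEq I]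
    (Φ : Finset V) (α : I → V)
    (hα : ∀ i, α i ∈ Φ)
    (h0 : (0 : V) ∉ (Φ : Set V))
    (hindep : LinearIndependent ℝ α)
    (hspan : Submodule.span ℝ (Set.range α) = ⊤)
    (s : I → (V ≃ₗ[ℝ] V))
    (hs : ∀ i x, s i x =
      x - ((2 * (inner ℝ (α i) x : ℝ) / (inner ℝ (α i) (α i) : ℝ)) • α i))
    (hstab : ∀ i, ∀ b ∈ Φ, s i b ∈ Φ)
    (hbase : ∀ b ∈ Φ,
      (∃ c : I → ℤ, (∀ i, 0 ≤ c i) ∧ b = ∑ i, (c i : ℝ) • α i) ∨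
      (∃ c : I → ℤ, (∀ i, c i ≤ 0) ∧ b = ∑ i, (c i : ℝ) • α i))
    (hcrys : ∀ a ∈ Φ, ∀ b ∈ Φ,
      ∃ z : ℤ, (2 * (inner ℝ a b : ℝ) / (inner ℝ a a : ℝ)) = (z : ℝ))
    (hreduced : ∀ b ∈ Φ, ∀ c : ℝ, c • b ∈ Φ → c = 1 ∨ c = -1)
    (hirr : ∀ A : Set I, A.Nonempty → A ≠ Set.univ →
      ∃ i ∈ A, ∃ j, j ∉ A ∧ (inner ℝ (α i) (α j) : ℝ) ≠ 0)
    (J J' : Set I) (hJ : J ≠ Set.univ) (hJ' : J' ≠ Set.univ)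
    (w : V ≃ₗ[ℝ] V)
    (hwW : w ∈ Subgroup.closure {g : V ≃ₗ[ℝ] V | ∃ j ∈ J', g = s j})
    (hlongest : ∀ b ∈ Φ, (b : V) ∈ Submodule.span ℝ (α '' J') →
      (∃ c : I → ℤ, (∀ i, 0 ≤ c i) ∧ b = ∑ i, (c i : ℝ) • α i) →
      ∃ c : I → ℤ, (∀ i, c i ≤ 0) ∧ w b = ∑ i, (c i : ℝ) • α i) :
    ∃ j, j ∉ J' ∧
      ¬ (w (α j) ∈ Φ ∧ w (α j) ∈ Submodule.span ℝ (α '' J)) := by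
    classical
  by_contra hcon
  push_neg at hcon
  -- basic facts
  have hα0 : ∀ i, α i ≠ 0 := by
    intro i hi
    exact h0 (by rw [← hi]; exact_mod_cast hα i)
  have hip : ∀ i, (0:ℝ) < inner ℝ (α i) (α i) :=
    fun i => lt_of_le_of_ne real_inner_self_nonneg (Ne.symm (inner_self_ne_zero.2 (hα0 i)))
  have hsp : ⊤ ≤ Submodule.span ℝ (Set.range α) := hspan.ge
  set B : Module.Basis I ℝ V := Module.Basis.mk hindep hsp with hBdef
  have hB : ∀ i, B i = α i := fun i => Module.Basis.mk_apply hindep hsp i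
  have hrepr : ∀ (c : I → ℝ) (j : I), B.repr (∑ i, c i • α i) j = c j := by
    intro c j
    have h1 : (∑ i, c i • α i) = ∑ i, c i • B i := by simp only [hB]
    rw [h1, B.repr_sum_self]
  have hreprz : ∀ (c : I → ℤ) (b : V), b = ∑ i, (c i : ℝ) • α i → ∀ j, B.repr b j = c j := by
    intro c b hb j; rw [hb]; exact hrepr (fun i => (c i : ℝ)) j
  have hsum : ∀ v : V, v = ∑ i, B.repr v i • α i := by
    intro v
    have h1 := B.sum_repr v
    simp only [hB] at h1
    exact h1.symm
  have hra : ∀ k l : I, B.repr (α k) l = if k = l then 1 else 0 := by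
    intro k l
    rw [← hB k, B.repr_self]
    exact Finsupp.single_apply
  have hreprlin : ∀ (x y : V) (t : ℝ) (k : I),
      B.repr (x - t • y) k = B.repr x k - t * B.repr y k := by
    intro x y t k
    simp [map_sub, map_smul]
  have hsign : ∀ b ∈ Φ, (∀ i, 0 ≤ B.repr b i) ∨ (∀ i, B.repr b i ≤ 0) := by
    intro b hb
    rcases hbase b hb with ⟨c, hc, hbc⟩ | ⟨c, hc, hbc⟩
    · left; intro i; rw [hreprz c b hbc i]; exact_mod_cast hc i
    · right; intro i; rw [hreprz c b hbc i]; exact_mod_cast hc i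
  have hspanco : ∀ (K : Set I) (v : V), v ∈ Submodule.span ℝ (α '' K) →
      ∀ i, i ∉ K → B.repr v i = 0 := by
    intro K v hv
    induction hv using Submodule.span_induction with
    | mem x hx =>
      obtain ⟨k, hk, rfl⟩ := hx
      intro i hi
      rw [hra]
      exact if_neg (fun h => hi (by rw [← h]; exact hk))
    | zero => intro i _; simp
    | add x y _ _ hx hy => intro i hi; simp [map_add, hx i hi, hy i hi]
    | smul t x _ hx => intro i hi; simp [map_smul, hx i hi]
  have hposcert : ∀ b ∈ Φ, (∃ i, 0 < B.repr b i) →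
      ∃ c : I → ℤ, (∀ i, 0 ≤ c i) ∧ b = ∑ i, (c i : ℝ) • α i := by
    intro b hb hex
    obtain ⟨i, hi⟩ := hex
    rcases hbase b hb with h | ⟨c, hc, hbc⟩
    · exact h
    · exfalso
      have h1 := hreprz c b hbc i
      have h2 : (c i : ℝ) ≤ 0 := by exact_mod_cast hc i
      rw [h1] at hi; linarith
  -- reflections are involutions
  have hsinv : ∀ i x, s i (s i x) = x := by
    intro i x
    have hne : (inner ℝ (α i) (α i) : ℝ) ≠ 0 := ne_of_gt (hip i)
    have e1 : (inner ℝ (α i) (s i x) : ℝ) = - inner ℝ (α i) x := by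
      rw [hs i x, inner_sub_right, real_inner_smul_right, div_mul_cancel₀ _ hne]
      ring
    rw [hs i (s i x), e1, hs i x]
    have e2 : 2 * -(inner ℝ (α i) x : ℝ) / inner ℝ (α i) (α i)
        = -(2 * (inner ℝ (α i) x : ℝ) / inner ℝ (α i) (α i)) := by ring
    rw [e2, neg_smul]
    abel
  have hsymm_eq : ∀ i x, (s i).symm x = s i x := by
    intro i x
    exact (s i).symm_apply_eq.2 (hsinv i x).symm
  -- closure facts
  set SpJ' : Submodule ℝ V := Submodule.span ℝ (α '' J') with hSpJ'
  have hWfacts : ∀ g : V ≃ₗ[ℝ] V,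
      g ∈ Subgroup.closure {g : V ≃ₗ[ℝ] V | ∃ j ∈ J', g = s j} →
      ((∀ b ∈ Φ, g b ∈ Φ) ∧ (∀ b ∈ Φ, g.symm b ∈ Φ)) ∧
      ((∀ v, g v - v ∈ SpJ') ∧ (∀ v, g.symm v - v ∈ SpJ')) := by
    intro g hg
    induction hg using Subgroup.closure_induction with
    | mem x hx =>
      obtain ⟨j, hjJ', rfl⟩ := hx
      have hmem : ∀ v : V, s j v - v ∈ SpJ' := by
        intro v
        rw [hs j v]
        have e : v - ((2 * (inner ℝ (α j) v : ℝ) / (inner ℝ (α j) (α j) : ℝ)) • α j) - v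
            = -((2 * (inner ℝ (α j) v : ℝ) / (inner ℝ (α j) (α j) : ℝ)) • α j) := by abel
        rw [e]
        exact Submodule.neg_mem _ (Submodule.smul_mem _ _
          (Submodule.subset_span ⟨j, hjJ', rfl⟩))
      refine ⟨⟨fun b hb => hstab j b hb, fun b hb => ?_⟩, ⟨hmem, fun v => ?_⟩⟩
      · rw [hsymm_eq]; exact hstab j b hb
      · rw [hsymm_eq]; exact hmem v
    | one =>
      have e1 : ∀ v : V, (1 : V ≃ₗ[ℝ] V) v - v ∈ SpJ' := by
        intro v
        rw [show (1 : V ≃ₗ[ℝ] V) v = v from rfl, sub_self]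
        exact Submodule.zero_mem _
      have e2 : ∀ v : V, (1 : V ≃ₗ[ℝ] V).symm v - v ∈ SpJ' := by
        intro v
        rw [show (1 : V ≃ₗ[ℝ] V).symm v = v from rfl, sub_self]
        exact Submodule.zero_mem _
      exact ⟨⟨fun b hb => hb, fun b hb => hb⟩, ⟨e1, e2⟩⟩
    | mul x y hx hy px py =>
      obtain ⟨⟨px1, px2⟩, ⟨px3, px4⟩⟩ := px
      obtain ⟨⟨py1, py2⟩, ⟨py3, py4⟩⟩ := py
      refine ⟨⟨fun b hb => px1 _ (py1 b hb), fun b hb => py2 _ (px2 b hb)⟩,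
        ⟨fun v => ?_, fun v => ?_⟩⟩
      · have e : (x * y) v - v = (x (y v) - y v) + (y v - v) := by
          show x (y v) - v = _; abel
        rw [e]; exact Submodule.add_mem _ (px3 (y v)) (py3 v)
      · have e : (x * y).symm v - v = (y.symm (x.symm v) - x.symm v) + (x.symm v - v) := by
          show y.symm (x.symm v) - v = _; abel
        rw [e]; exact Submodule.add_mem _ (py4 (x.symm v)) (px4 v)
    | inv x hx px =>
      obtain ⟨⟨px1, px2⟩, ⟨px3, px4⟩⟩ := px
      refine ⟨⟨fun b hb => px2 b hb, fun b hb => ?_⟩, ⟨fun v => px4 v, fun v => ?_⟩⟩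
      · show x.symm.symm b ∈ Φ; rw [LinearEquiv.symm_symm]; exact px1 b hb
      · show x.symm.symm v - v ∈ SpJ'; rw [LinearEquiv.symm_symm]; exact px3 v
  obtain ⟨⟨hwΦ, hwsΦ⟩, ⟨hwsp, _⟩⟩ := hWfacts w hwW
  -- inner ℝ products of distinct simple roots are nonpositive
  have hnonpos : ∀ i j : I, i ≠ j → (inner ℝ (α i) (α j) : ℝ) ≤ 0 := by
    intro i j hij
    by_contra hpos
    push_neg at hpos
    obtain ⟨z, hz⟩ := hcrys (α i) (hα i) (α j) (hα j)
    have hz0 : (0:ℝ) < z := by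
      rw [← hz]
      exact div_pos (by linarith) (hip i)
    have hz1 : (1:ℝ) ≤ z := by exact_mod_cast Int.cast_pos.1 hz0
    have hroot : s i (α j) ∈ Φ := hstab i _ (hα j)
    have heq : s i (α j) = α j - (z:ℝ) • α i := by rw [hs, hz]
    have hi' : B.repr (s i (α j)) i = -(z:ℝ) := by
      rw [heq, hreprlin, hra, hra, if_neg (Ne.symm hij), if_pos rfl]
      ring
    have hj' : B.repr (s i (α j)) j = 1 := by
      rw [heq, hreprlin, hra, hra, if_pos rfl, if_neg hij]
      ring
    rcases hsign _ hroot with h | h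
    · have := h i; rw [hi'] at this; linarith
    · have := h j; rw [hj'] at this; linarith
  -- parts of positive/negative roots in the span of α '' J'
  set PJ : Finset V := Φ.filter (fun b => b ∈ SpJ' ∧ ∀ i, 0 ≤ B.repr b i) with hPJ
  set NJ : Finset V := Φ.filter (fun b => b ∈ SpJ' ∧ ∀ i, B.repr b i ≤ 0) with hNJ
  have hwspmem : ∀ v ∈ SpJ', w v ∈ SpJ' := by
    intro v hv
    have h1 := hwsp v
    have h2 : w v = (w v - v) + v := by abel
    rw [h2]; exact Submodule.add_mem _ h1 hv
  have hαmPJ : ∀ m ∈ J', α m ∈ PJ := by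
    intro m hm
    refine Finset.mem_filter.2 ⟨hα m, Submodule.subset_span ⟨m, hm, rfl⟩, ?_⟩
    intro i
    rw [hra]
    split <;> norm_num
  have hPJtoNJ : ∀ b ∈ PJ, w b ∈ NJ := by
    intro b hb
    rw [Finset.mem_filter] at hb
    obtain ⟨hbΦ, hbSp, hbpos⟩ := hb
    have hbne : b ≠ 0 := fun h => h0 (by rw [← h]; exact_mod_cast hbΦ)
    have hex : ∃ i, 0 < B.repr b i := by
      by_contra h
      push_neg at h
      have hz : ∀ i, B.repr b i = 0 := fun i => le_antisymm (h i) (hbpos i)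
      exact hbne (by rw [hsum b]; simp [hz])
    obtain ⟨d, hd, hwd⟩ := hlongest b hbΦ hbSp (hposcert b hbΦ hex)
    refine Finset.mem_filter.2 ⟨hwΦ b hbΦ, hwspmem b hbSp, ?_⟩
    intro i
    rw [hreprz d (w b) hwd i]
    exact_mod_cast hd i
  have hsurj : ∀ m ∈ J', ∃ u, u ∈ Φ ∧ u ∈ SpJ' ∧ (∀ i, B.repr u i ≤ 0) ∧ w u = α m := by
    intro m hm
    set T : Finset V := PJ ∪ NJ with hT
    have himg : Finset.image (fun b => w b) T ⊆ T := by
      intro x hx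
      rw [Finset.mem_image] at hx
      obtain ⟨b, hbT, rfl⟩ := hx
      rw [hT, Finset.mem_union] at hbT ⊢
      rcases hbT with hb | hb
      · exact Or.inr (hPJtoNJ b hb)
      · rw [Finset.mem_filter] at hb
        have h1 : w b ∈ Φ := hwΦ b hb.1
        have h2 : w b ∈ SpJ' := hwspmem b hb.2.1
        rcases hsign (w b) h1 with h | h
        · exact Or.inl (Finset.mem_filter.2 ⟨h1, h2, h⟩)
        · exact Or.inr (Finset.mem_filter.2 ⟨h1, h2, h⟩)
    have hcard : T.card ≤ (Finset.image (fun b => w b) T).card := by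
      rw [Finset.card_image_of_injective T w.injective]
    have heqT := Finset.eq_of_subset_of_card_le himg hcard
    have hmT : α m ∈ T := Finset.mem_union.2 (Or.inl (hαmPJ m hm))
    rw [← heqT, Finset.mem_image] at hmT
    obtain ⟨u, huT, hwu⟩ := hmT
    rcases Finset.mem_union.1 huT with hu | hu
    · exfalso
      have h1 := hPJtoNJ u hu
      rw [hwu, Finset.mem_filter] at h1
      have h2 := h1.2.2 m
      rw [hra, if_pos rfl] at h2
      linarith
    · rw [Finset.mem_filter] at hu
      exact ⟨u, hu.1, hu.2.1, hu.2.2, hwu⟩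
  -- Fact F : w (α j) pairs nonnegatively with α m for m ∈ J'
  have hF : ∀ j, j ∉ J' → ∀ m, m ∈ J' → 0 ≤ (inner ℝ (w (α j)) (α m) : ℝ) := by
    intro j hjJ' m hmJ'
    by_contra hlt
    push_neg at hlt
    obtain ⟨u, huΦ, huSp, hule, hwu⟩ := hsurj m hmJ'
    obtain ⟨z, hz⟩ := hcrys (α m) (hα m) (w (α j)) (hwΦ _ (hα j))
    have hzneg : (z:ℝ) < 0 := by
      rw [← hz]
      apply div_neg_of_neg_of_pos _ (hip m)
      rw [real_inner_comm]
      linarith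
    have hγΦ : s m (w (α j)) ∈ Φ := hstab m _ (hwΦ _ (hα j))
    have hγeq : s m (w (α j)) = w (α j) - (z:ℝ) • α m := by rw [hs, hz]
    have hvΦ : w.symm (s m (w (α j))) ∈ Φ := hwsΦ _ hγΦ
    have hveq : w.symm (s m (w (α j))) = α j - (z:ℝ) • u := by
      apply w.injective
      rw [LinearEquiv.apply_symm_apply, map_sub, map_smul, hwu, hγeq]
    rw [hveq] at hvΦ
    have hurz : ∀ k, k ∉ J' → B.repr u k = 0 := fun k hk => hspanco J' u huSp k hk
    have hvj : B.repr (α j - (z:ℝ) • u) j = 1 := by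
      rw [hreprlin, hra, if_pos rfl, hurz j hjJ']
      ring
    obtain ⟨k, hk⟩ : ∃ k, B.repr u k ≠ 0 := by
      by_contra h
      push_neg at h
      have : u = 0 := by rw [hsum u]; simp [h]
      exact h0 (by rw [← this]; exact_mod_cast huΦ)
    have hkJ' : k ∈ J' := by
      by_contra hkk
      exact hk (hurz k hkk)
    have hkj : k ≠ j := fun h => hjJ' (h ▸ hkJ')
    have huk : B.repr u k < 0 := lt_of_le_of_ne (hule k) hk
    have hvk : B.repr (α j - (z:ℝ) • u) k < 0 := by
      rw [hreprlin, hra, if_neg (Ne.symm hkj)]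
      nlinarith
    rcases hsign _ hvΦ with h | h
    · have := h k; linarith
    · have := h j; rw [hvj] at this; linarith
  -- coordinates of w (α j) for j ∉ J'
  have hcoord1 : ∀ j, j ∉ J' → B.repr (w (α j)) j = 1 := by
    intro j hj
    have h1 := hspanco J' _ (hwsp (α j)) j hj
    have h2 : B.repr (w (α j)) j - B.repr (α j) j = 0 := by
      rw [← h1]; simp [map_sub]
    have h3 : B.repr (α j) j = 1 := by rw [hra, if_pos rfl]
    linarith
  have hwpos : ∀ j, j ∉ J' → ∀ k, 0 ≤ B.repr (w (α j)) k := by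
    intro j hj k
    rcases hsign _ (hwΦ _ (hα j)) with h | h
    · exact h k
    · exfalso
      have := h j
      rw [hcoord1 j hj] at this
      linarith
  -- the main argument
  set Bs : Set I := {i | i ∉ J' ∨ ∃ j, j ∉ J' ∧ B.repr (w (α j)) i ≠ 0} with hBs
  have hBsJ : Bs ⊆ J := by
    intro i hi
    rcases hi with hi | ⟨j, hj, hij⟩
    · by_contra hiJ
      have h1 := hspanco J _ (hcon i hi).2 i hiJ
      rw [hcoord1 i hi] at h1
      exact one_ne_zero h1
    · by_contra hiJ
      exact hij (hspanco J _ (hcon j hj).2 i hiJ)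
  obtain ⟨j0, hj0⟩ := (Set.ne_univ_iff_exists_notMem J').1 hJ'
  have hBsne : Bs.Nonempty := ⟨j0, Or.inl hj0⟩
  have hBsnu : Bs ≠ Set.univ := by
    intro h
    exact hJ (Set.eq_univ_of_univ_subset (h ▸ hBsJ))
  obtain ⟨i, hiB, m, hmB, hinz⟩ := hirr Bs hBsne hBsnu
  have hmJ' : m ∈ J' := by
    by_contra h
    exact hmB (Or.inl h)
  have hmco : ∀ j, j ∉ J' → B.repr (w (α j)) m = 0 := by
    intro j hj
    by_contra h
    exact hmB (Or.inr ⟨j, hj, h⟩)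
  have him : i ≠ m := fun h => hmB (h ▸ hiB)
  have hineg : (inner ℝ (α i) (α m) : ℝ) < 0 := lt_of_le_of_ne (hnonpos i m him) hinz
  obtain ⟨j, hjJ', hji⟩ : ∃ j, j ∉ J' ∧ 0 < B.repr (w (α j)) i := by
    rcases hiB with hi | ⟨j, hj, hij⟩
    · exact ⟨i, hi, by rw [hcoord1 i hi]; norm_num⟩
    · exact ⟨j, hj, lt_of_le_of_ne (hwpos j hj i) (Ne.symm hij)⟩
  have hcomp : (inner ℝ (w (α j)) (α m) : ℝ) = ∑ k, B.repr (w (α j)) k * (inner ℝ (α k) (α m) : ℝ) := by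
    conv_lhs => rw [hsum (w (α j))]
    rw [sum_inner]
    refine Finset.sum_congr rfl fun k _ => ?_
    rw [real_inner_smul_left]
  have hlt : (inner ℝ (w (α j)) (α m) : ℝ) < 0 := by
    rw [hcomp]
    have h1 : ∑ k : I, (0:ℝ) = (0:ℝ) := by simp
    rw [← h1]
    refine Finset.sum_lt_sum ?_ ⟨i, Finset.mem_univ i, ?_⟩
    · intro k _
      by_cases hkm : k = m
      · subst hkm
        rw [hmco j hjJ']
        simp
      · have := hwpos j hjJ' k
        have := hnonpos k m hkm
        nlinarith
    · exact mul_neg_of_pos_of_neg hji hineg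
  have := hF j hjJ' m hmJ'
  linarith
end

section
/- Let $T_{>1} = \{\mathrm{diag}(t_1,\dots,t_n) : t_1 > t_2 > \cdots > t_n > 0\}$ inside $GL_n(\mathbb{R})$. For any $t \in T_{>1}$, there exists a matrix $g$ in the conjugacy class of $t$ (in $GL_n(\mathbb{R})$) which is tridiagonal with all entries on the diagonal, superdiagonal and subdiagonal strictly positive: i.e., every real diagonalizable matrix with distinct positive eigenvalues is conjugate to a positive Jacobi matrix. -/
open Matrix

/-- Every real diagonalizable matrix with distinct positive eigenvalues
`t₁ > t₂ > ⋯ > tₙ > 0` is conjugate in `GL_n(ℝ)` to a positive Jacobi matrix: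
a tridiagonal matrix with strictly positive diagonal, superdiagonal and
subdiagonal entries. -/
theorem stmt19 {n : ℕ} (t : Fin n → ℝ) (hpos : ∀ i, 0 < t i)
    (hmono : StrictAnti t) :
    ∃ (g : Matrix (Fin n) (Fin n) ℝ) (P : GL (Fin n) ℝ),
      g = (↑P : Matrix (Fin n) (Fin n) ℝ) * Matrix.diagonal t *
        (↑(P⁻¹) : Matrix (Fin n) (Fin n) ℝ) ∧
      (∀ i : Fin n, 0 < g i i) ∧
      (∀ i k : Fin n, (i : ℕ) + 1 = (k : ℕ) → 0 < g i k) ∧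
      (∀ i k : Fin n, (k : ℕ) + 1 = (i : ℕ) → 0 < g i k) ∧
      (∀ i k : Fin n, ((i : ℕ) + 1 < (k : ℕ) ∨ (k : ℕ) + 1 < (i : ℕ)) →
        g i k = 0) := by
  classical
  set f : Fin n → EuclideanSpace ℝ (Fin n) := fun j => (WithLp.toLp 2 (fun i => t i ^ (j:ℕ)) : EuclideanSpace ℝ (Fin n)) with hf
  -- linear independence of the Krylov family
  have hfli : LinearIndependent ℝ f := by
    have hdet : IsUnit ((Matrix.vandermonde t)ᵀ) := by
      rw [Matrix.isUnit_iff_isUnit_det, Matrix.det_transpose, Matrix.det_vandermonde,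
        isUnit_iff_ne_zero]
      refine Finset.prod_ne_zero_iff.2 fun i _ => Finset.prod_ne_zero_iff.2 fun j hj => ?_
      exact sub_ne_zero_of_ne (hmono.injective.ne (Finset.mem_Ioi.mp hj).ne')
    have h := (Matrix.linearIndependent_rows_iff_isUnit.mpr hdet).map' (WithLp.linearEquiv 2 ℝ (Fin n → ℝ)).symm.toLinearMap (WithLp.linearEquiv 2 ℝ (Fin n → ℝ)).symm.ker
    have heq : f = ⇑(WithLp.linearEquiv 2 ℝ (Fin n → ℝ)).symm.toLinearMap ∘ (Matrix.vandermonde t)ᵀ.row := by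
      funext j; ext i; simp [f, Matrix.vandermonde]
    rw [heq]; exact h
  -- the multiplication operator
  set Dl : EuclideanSpace ℝ (Fin n) →ₗ[ℝ] EuclideanSpace ℝ (Fin n) :=
    { toFun := fun x => (WithLp.toLp 2 (fun i => t i * x i) : EuclideanSpace ℝ (Fin n))
      map_add' := by intro x y; ext i; simp [PiLp.add_apply, mul_add]
      map_smul' := by intro c x; ext i; simp [PiLp.smul_apply, smul_eq_mul]; ring } with hDl
  have hDlapp : ∀ (x : EuclideanSpace ℝ (Fin n)) (i : Fin n), Dl x i = t i * x i := fun x i => rfl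
  have hinner : ∀ x y : EuclideanSpace ℝ (Fin n), (inner ℝ x y : ℝ) = ∑ l, x l * y l := by
    intro x y; rw [PiLp.inner_apply]; simp [RCLike.inner_apply, mul_comm]
  set v : Fin n → EuclideanSpace ℝ (Fin n) := @InnerProductSpace.gramSchmidtNormed ℝ (EuclideanSpace ℝ (Fin n)) _ _ _ (Fin n)
    (inferInstance : LinearOrder (Fin n))
    (inferInstance : LocallyFiniteOrderBot (Fin n))
    (inferInstance : WellFoundedLT (Fin n)) f with hv
  have hortho : Orthonormal ℝ v := @InnerProductSpace.gramSchmidtNormed_orthonormal ℝ _ _ _ _ (Fin n)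
    (inferInstance : LinearOrder (Fin n))
    (inferInstance : LocallyFiniteOrderBot (Fin n))
    (inferInstance : WellFoundedLT (Fin n)) f hfli
  have horthoite : ∀ i k : Fin n, (inner ℝ (v i) (v k) : ℝ) = if i = k then 1 else 0 :=
    fun i k => orthonormal_iff_ite.mp hortho i k
  have hspanIic : ∀ c : Fin n, Submodule.span ℝ (v '' Set.Iic c)
      = Submodule.span ℝ (f '' Set.Iic c) := by
    intro c
    rw [hv]
    exact (@InnerProductSpace.span_gramSchmidtNormed ℝ _ _ _ _ (Fin n) (inferInstance : LinearOrder (Fin n)) (inferInstance : LocallyFiniteOrderBot (Fin n)) (inferInstance : WellFoundedLT (Fin n)) f (Set.Iic c)).trans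
      (@InnerProductSpace.span_gramSchmidt_Iic ℝ _ _ _ _ (Fin n) (inferInstance : LinearOrder (Fin n)) (inferInstance : LocallyFiniteOrderBot (Fin n)) (inferInstance : WellFoundedLT (Fin n)) f c)
  have hspanIio : ∀ c : Fin n, Submodule.span ℝ (v '' Set.Iio c)
      = Submodule.span ℝ (f '' Set.Iio c) := by
    intro c
    rw [hv]
    exact (@InnerProductSpace.span_gramSchmidtNormed ℝ _ _ _ _ (Fin n) (inferInstance : LinearOrder (Fin n)) (inferInstance : LocallyFiniteOrderBot (Fin n)) (inferInstance : WellFoundedLT (Fin n)) f (Set.Iio c)).trans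
      (@InnerProductSpace.span_gramSchmidt_Iio ℝ _ _ _ _ (Fin n) (inferInstance : LinearOrder (Fin n)) (inferInstance : LocallyFiniteOrderBot (Fin n)) (inferInstance : WellFoundedLT (Fin n)) f c)
  -- inner product of v i with span of other v's is zero
  have hvz : ∀ (i : Fin n) (s : Set (Fin n)), i ∉ s →
      ∀ y ∈ Submodule.span ℝ (v '' s), (inner ℝ (v i) y : ℝ) = 0 := by
    intro i s his y hy
    induction hy using Submodule.span_induction with
    | mem x hx =>
        obtain ⟨j, hj, rfl⟩ := hx
        rw [horthoite, if_neg]; rintro rfl; exact his hj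
    | zero => exact inner_zero_right _
    | add x y hx hy ihx ihy => rw [inner_add_right, ihx, ihy, add_zero]
    | smul a x hx ihx => rw [real_inner_smul_right, ihx, mul_zero]
  -- the Jacobi matrix entries
  set J : Fin n → Fin n → ℝ := fun i k => (inner ℝ (v i) (Dl (v k)) : ℝ) with hJ
  have hsymm : ∀ i k, J i k = J k i := by
    intro i k
    rw [hJ]; simp only [hinner]
    exact Finset.sum_congr rfl fun l _ => by simp only [hDlapp]; ring
  -- membership of v k in spans
  have hvmem : ∀ k : Fin n, v k ∈ Submodule.span ℝ (f '' Set.Iic k) := by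
    intro k
    rw [← hspanIic]
    exact Submodule.subset_span ⟨k, Set.mem_Iic.mpr le_rfl, rfl⟩
  have hDf : ∀ (j : Fin n) (h : (j:ℕ)+1 < n), Dl (f j) = f ⟨(j:ℕ)+1, h⟩ := by
    intro j h
    ext i
    rw [hDlapp, hf]
    show t i * t i ^ (j:ℕ) = t i ^ (((⟨(j:ℕ)+1, h⟩ : Fin n)):ℕ)
    rw [pow_succ]; ring
  -- D maps span(f '' Iic k) into span (f '' Iic (k+1))
  have hDspan : ∀ (k m : Fin n), (k:ℕ) + 1 = (m:ℕ) →
      Dl (v k) ∈ Submodule.span ℝ (f '' Set.Iic m) := by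
    intro k m hkm
    refine Submodule.span_induction
      (p := fun y _ => Dl y ∈ Submodule.span ℝ (f '' Set.Iic m)) ?_ ?_ ?_ ?_ (hvmem k)
    · rintro x ⟨j, hj, rfl⟩
      have hjk : (j:ℕ) ≤ (k:ℕ) := hj
      have hjn : (j:ℕ) + 1 < n := by have := m.isLt; omega
      rw [hDf j hjn]
      refine Submodule.subset_span ⟨_, Set.mem_Iic.mpr ?_, rfl⟩
      show ((⟨(j:ℕ)+1, hjn⟩ : Fin n):ℕ) ≤ (m:ℕ)
      simp only []
      omega
    · show Dl 0 ∈ Submodule.span ℝ (f '' Set.Iic m)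
      rw [map_zero]; exact Submodule.zero_mem _
    · intro x y hx hy ihx ihy
      show Dl (x + y) ∈ Submodule.span ℝ (f '' Set.Iic m)
      rw [map_add]; exact Submodule.add_mem _ ihx ihy
    · intro a x hx ihx
      show Dl (a • x) ∈ Submodule.span ℝ (f '' Set.Iic m)
      rw [LinearMap.map_smul]; exact Submodule.smul_mem _ _ ihx
  -- far off-diagonal entries vanish
  have hJ0 : ∀ i k : Fin n, (k:ℕ) + 1 < (i:ℕ) → J i k = 0 := by
    intro i k hik
    have hm : (k:ℕ) + 1 < n := hik.trans i.isLt
    set m : Fin n := ⟨(k:ℕ)+1, hm⟩ with hmdef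
    have h1 : Dl (v k) ∈ Submodule.span ℝ (v '' Set.Iic m) := by
      rw [hspanIic]; exact hDspan k m rfl
    exact hvz i (Set.Iic m) (by
      simp only [Set.mem_Iic]
      intro hle
      exact absurd (show (i:ℕ) ≤ (k:ℕ)+1 from hle) (by omega)) _ h1
  -- diagonal entries are positive
  have hJdiag : ∀ k, 0 < J k k := by
    intro k
    have hvk : v k ≠ 0 := hortho.ne_zero k
    obtain ⟨l0, hl0⟩ : ∃ l, v k l ≠ 0 := by
      by_contra h; push_neg at h
      exact hvk (PiLp.ext h)
    have hcalc : J k k = ∑ l, t l * (v k l)^2 := by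
      show (inner ℝ (v k) (Dl (v k)) : ℝ) = _
      rw [hinner]
      exact Finset.sum_congr rfl fun l _ => by rw [hDlapp]; ring
    rw [hcalc]
    refine Finset.sum_pos' (fun l _ => mul_nonneg (hpos l).le (sq_nonneg _))
      ⟨l0, Finset.mem_univ _, mul_pos (hpos l0) (pow_two_pos_of_ne_zero hl0)⟩
  -- subdiagonal entries are nonzero
  have hJsub : ∀ (k m : Fin n), (k:ℕ) + 1 = (m:ℕ) → J m k ≠ 0 := by
    intro k m hkm h0
    have h0' : (inner ℝ (v m) (Dl (v k)) : ℝ) = 0 := h0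
    have hnm : Nonempty (Fin n) := ⟨k⟩
    have hcard : Fintype.card (Fin n) = Module.finrank ℝ (EuclideanSpace ℝ (Fin n)) := by
      simp [finrank_euclideanSpace_fin]
    set b := basisOfLinearIndependentOfCardEqFinrank hfli hcard with hb0
    have hb : ⇑b = f := coe_basisOfLinearIndependentOfCardEqFinrank hfli hcard
    have h1 : Dl (v k) ∈ Submodule.span ℝ (v '' Set.Iic m) := by
      rw [hspanIic]; exact hDspan k m hkm
    have hIic : Set.Iic m = insert m (Set.Iic k) := by
      ext j
      simp only [Set.mem_Iic, Set.mem_insert_iff, Fin.le_def, Fin.ext_iff]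
      omega
    rw [hIic, Set.image_insert_eq] at h1
    obtain ⟨a, z, hz, hzeq⟩ := Submodule.mem_span_insert.mp h1
    have hmk : m ∉ Set.Iic k := by
      simp only [Set.mem_Iic, Fin.le_def]; omega
    have hzip : (inner ℝ (v m) z : ℝ) = 0 := hvz m (Set.Iic k) hmk z hz
    have ha : a = 0 := by
      have hcalc : (inner ℝ (v m) (Dl (v k)) : ℝ) = a := by
        rw [hzeq, inner_add_right, real_inner_smul_right, hzip, horthoite m m, if_pos rfl]
        ring
      rw [h0'] at hcalc; exact hcalc.symm
    have h2 : Dl (v k) ∈ Submodule.span ℝ (f '' Set.Iic k) := by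
      rw [← hspanIic]
      rw [hzeq, ha, zero_smul, zero_add]
      exact hz
    have hsupp1 : ↑(b.repr (v k)).support ⊆ Set.Iic k :=
      Module.Basis.repr_support_subset_of_mem_span b (Set.Iic k) (by rw [hb]; exact hvmem k)
    have hck : b.repr (v k) k ≠ 0 := by
      intro hzero
      have hsupp2 : ↑(b.repr (v k)).support ⊆ Set.Iio k := by
        intro j hj
        have h3 : j ∈ Set.Iic k := hsupp1 hj
        have h4 : j ≠ k := by
          rintro rfl
          exact (Finsupp.mem_support_iff.mp hj) hzero
        exact Set.mem_Iio.mpr (lt_of_le_of_ne (Set.mem_Iic.mp h3) h4)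
      have hmem : v k ∈ Submodule.span ℝ (v '' Set.Iio k) := by
        rw [hspanIio, ← hb]
        exact (Module.Basis.mem_span_image b).mpr hsupp2
      have h5 : (inner ℝ (v k) (v k) : ℝ) = 0 :=
        hvz k (Set.Iio k) (by simp) (v k) hmem
      rw [horthoite k k, if_pos rfl] at h5
      norm_num at h5
    have hmn : (k:ℕ) + 1 < n := hkm ▸ m.isLt
    have hψv : ∀ y ∈ Submodule.span ℝ (f '' Set.Iic k),
        b.repr (Dl y) m = b.repr y k := by
      intro y hy
      induction hy using Submodule.span_induction with
      | mem x hx =>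
          obtain ⟨j, hj, rfl⟩ := hx
          have hjk : (j:ℕ) ≤ (k:ℕ) := hj
          have hjn : (j:ℕ) + 1 < n := by omega
          rw [hDf j hjn, ← hb, Module.Basis.repr_self, Module.Basis.repr_self,
            Finsupp.single_apply, Finsupp.single_apply]
          have hiff : (⟨(j:ℕ)+1, hjn⟩ : Fin n) = m ↔ j = k := by
            rw [Fin.ext_iff, Fin.ext_iff]
            show (j:ℕ) + 1 = (m:ℕ) ↔ (j:ℕ) = (k:ℕ)
            omega
          simp only [hiff]
      | zero => simp
      | add x y hx hy ihx ihy =>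
          rw [map_add, map_add, map_add, Finsupp.add_apply, Finsupp.add_apply, ihx, ihy]
      | smul a x hx ihx =>
          simp only [LinearMap.map_smul, _root_.map_smul, Finsupp.smul_apply, ihx]
    have h5 : b.repr (Dl (v k)) m = b.repr (v k) k := hψv (v k) (hvmem k)
    have h6 : b.repr (Dl (v k)) m = 0 := by
      by_contra hne
      have hs : ↑(b.repr (Dl (v k))).support ⊆ Set.Iic k :=
        Module.Basis.repr_support_subset_of_mem_span b (Set.Iic k) (by rw [hb]; exact h2)
      have := hs (Finsupp.mem_support_iff.mpr hne)
      simp only [Set.mem_Iic, Fin.le_def] at this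
      omega
    exact hck (h5.symm.trans h6)
  -- signs
  set ε' : ℕ → ℝ := fun m => Nat.rec (motive := fun _ => ℝ) 1
    (fun p ih => if h : p + 1 < n then
      (if 0 < J ⟨p+1, h⟩ ⟨p, Nat.lt_of_succ_lt h⟩ then ih else -ih) else ih) m with hε'
  have hsq : ∀ m : ℕ, ε' m * ε' m = 1 := by
    intro m
    induction m with
    | zero => norm_num [hε']
    | succ p ih =>
        rw [hε']
        by_cases h : p + 1 < n
        · simp only [dif_pos h]
          by_cases h2 : 0 < J ⟨p+1, h⟩ ⟨p, Nat.lt_of_succ_lt h⟩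
          · simpa [if_pos h2] using ih
          · simp only [if_neg h2, neg_mul_neg]; exact ih
        · simpa [dif_neg h] using ih
  set ε : Fin n → ℝ := fun i => ε' (i:ℕ) with hεdef
  have hkey : ∀ (k m : Fin n), (k:ℕ) + 1 = (m:ℕ) → 0 < ε m * J m k * ε k := by
    intro k m hkm
    have hm : (k:ℕ) + 1 < n := hkm ▸ m.isLt
    have hmeq : m = ⟨(k:ℕ)+1, hm⟩ := Fin.ext hkm.symm
    have hkeq : (⟨(k:ℕ), Nat.lt_of_succ_lt hm⟩ : Fin n) = k := Fin.eta _ _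
    have hstep : ε' ((k:ℕ)+1) =
        if 0 < J ⟨(k:ℕ)+1, hm⟩ ⟨(k:ℕ), Nat.lt_of_succ_lt hm⟩ then ε' (k:ℕ) else -ε' (k:ℕ) := by
      rw [hε']; simp only [dif_pos hm]
    rw [hmeq]
    simp only [hεdef, hkeq, hstep]
    by_cases h2 : 0 < J ⟨(k:ℕ)+1, hm⟩ ⟨(k:ℕ), Nat.lt_of_succ_lt hm⟩
    · rw [if_pos h2, hkeq] at *
      calc 0 < J ⟨(k:ℕ)+1, hm⟩ k * 1 := by linarith
        _ = ε' (k:ℕ) * J ⟨(k:ℕ)+1, hm⟩ k * ε' (k:ℕ) := by rw [← hsq (k:ℕ)]; ring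
    · rw [if_neg h2, hkeq] at *
      have hne : J ⟨(k:ℕ)+1, hm⟩ k ≠ 0 := by
        have := hJsub k ⟨(k:ℕ)+1, hm⟩ rfl
        exact this
      have hlt : J ⟨(k:ℕ)+1, hm⟩ k < 0 := lt_of_le_of_ne (not_lt.mp h2) hne
      calc 0 < -J ⟨(k:ℕ)+1, hm⟩ k * 1 := by linarith
        _ = -ε' (k:ℕ) * J ⟨(k:ℕ)+1, hm⟩ k * ε' (k:ℕ) := by rw [← hsq (k:ℕ)]; ring
  -- matrices
  set V : Matrix (Fin n) (Fin n) ℝ := Matrix.of fun i l => v i l with hV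
  have hVVt : V * Vᵀ = 1 := by
    ext i k
    rw [Matrix.mul_apply, Matrix.one_apply]
    simpa [hV, hinner] using (horthoite i k)
  have hVtV : Vᵀ * V = 1 := mul_eq_one_comm.mp hVVt
  set S : Matrix (Fin n) (Fin n) ℝ := Matrix.diagonal ε with hS
  have hSS : S * S = 1 := by
    rw [hS, Matrix.diagonal_mul_diagonal,
      show (fun i : Fin n => ε i * ε i) = fun _ => (1:ℝ) from funext fun i => hsq (i:ℕ),
      Matrix.diagonal_one]
  have hJeq : V * Matrix.diagonal t * Vᵀ = Matrix.of J := by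
    ext i k
    rw [Matrix.mul_apply]
    simp only [Matrix.mul_diagonal, Matrix.of_apply, hJ, hinner]
    exact Finset.sum_congr rfl fun l _ => by
      simp only [hV, Matrix.of_apply, Matrix.transpose_apply, hDlapp]; ring
  have hentry : ∀ i k : Fin n, (S * Matrix.of J * S) i k = ε i * J i k * ε k := by
    intro i k
    rw [hS, Matrix.mul_diagonal, Matrix.diagonal_mul, Matrix.of_apply]
  refine ⟨S * Matrix.of J * S,
    ⟨S * V, Vᵀ * S, by rw [Matrix.mul_assoc, ← Matrix.mul_assoc V, hVVt, Matrix.one_mul, hSS],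
      by rw [Matrix.mul_assoc, ← Matrix.mul_assoc S, hSS, Matrix.one_mul, hVtV]⟩, ?_, ?_, ?_, ?_, ?_⟩
  · show S * Matrix.of J * S = (S * V) * Matrix.diagonal t * (Vᵀ * S)
    rw [← hJeq]; noncomm_ring
  · -- diagonal
    intro i
    rw [hentry]
    calc (0:ℝ) < J i i * 1 := by have := hJdiag i; linarith
      _ = ε i * J i i * ε i := by rw [hεdef, ← hsq (i:ℕ)]; ring
  · -- superdiagonal
    intro i k hik
    rw [hentry i k, hsymm i k]
    have := hkey i k hik
    linarith [hkey i k hik]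
  · -- subdiagonal
    intro i k hki
    rw [hentry i k]
    exact hkey k i hki
  · -- zeros
    intro i k h
    rw [hentry i k]
    rcases h with h | h
    · rw [hsymm i k, hJ0 k i h]; ring
    · rw [hJ0 i k h]; ring
end
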